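/- Let G be a group, H a Hilbert space, and ξ, η : G → H bounded functions with sup-norm at most 1. Suppose E ⊆ G contains the identity e and satisfies: for all x, y ∈ G, x * y⁻¹ ∈ E if and only if ⟨ξ(x), η(y)⟩ = 1, and moreover the indicator condition χ_E(x y⁻¹) = ⟨ξ(x), η(y)⟩ holds for all x, y (where χ_E takes value 1 on E and 0 off E). Then E is closed under multiplication (i.e., E is a subsemigroup of G). -/

import Mathlib

open scoped Pointwise
open Classical

lemma aux_eq {H : Type*} [NormedAddCommGroup H] [InnerProductSpace ℂ H]
    {u v : H} (hu : ‖u‖ ≤ 1) (hv : ‖v‖ ≤ 1) (h : (inner ℂ u v : ℂ) = 1) :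
    u = v ∧ ‖u‖ = 1 := by
  have h1 : (1 : ℝ) ≤ ‖u‖ * ‖v‖ := by
    calc (1 : ℝ) = ‖(inner ℂ u v : ℂ)‖ := by rw [h]; simp
    _ ≤ ‖u‖ * ‖v‖ := norm_inner_le_norm u v
  have hun : ‖u‖ = 1 := by nlinarith [norm_nonneg u, norm_nonneg v]
  have hvn : ‖v‖ = 1 := by nlinarith [norm_nonneg u, norm_nonneg v]
  exact ⟨(inner_eq_one_iff_of_norm_eq_one hun hvn).mp h, hun⟩

theorem stmt_1 {G : Type*} [Group G] {H : Type*} [NormedAddCommGroup H]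
    [InnerProductSpace ℂ H] (ξ η : G → H)
    (hξ : ∀ x, ‖ξ x‖ ≤ 1) (hη : ∀ y, ‖η y‖ ≤ 1)
    (E : Set G) (hE : (1 : G) ∈ E)
    (hiff : ∀ x y : G, x * y⁻¹ ∈ E ↔ (inner ℂ (ξ x) (η y) : ℂ) = 1)
    (hrep : ∀ x y : G, (if x * y⁻¹ ∈ E then (1 : ℂ) else 0) = inner ℂ (ξ x) (η y)) :
    ∀ a ∈ E, ∀ b ∈ E, a * b ∈ E := by
  intro a ha b hb
  -- ξ(ab) = η b
  have hab : (a * b) * b⁻¹ ∈ E := by simpa using ha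
  have h1 := aux_eq (hξ (a * b)) (hη b) ((hiff (a * b) b).mp hab)
  -- ξ b = η b (from 1 = b * b⁻¹ ∈ E)
  have hbb : b * b⁻¹ ∈ E := by simpa using hE
  have h2 := aux_eq (hξ b) (hη b) ((hiff b b).mp hbb)
  -- ξ b = η 1 (from b = b * 1⁻¹ ∈ E)
  have hb1 : b * (1 : G)⁻¹ ∈ E := by simpa using hb
  have h3 := aux_eq (hξ b) (hη 1) ((hiff b 1).mp hb1)
  have hη1 : ‖η 1‖ = 1 := by rw [← h3.1]; exact h3.2
  have key : (inner ℂ (ξ (a * b)) (η 1) : ℂ) = 1 := by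
    rw [h1.1, h2.1.symm, h3.1]
    rw [inner_self_eq_norm_sq_to_K, hη1]
    norm_num
  have := (hiff (a * b) 1).mpr key
  simpa using this
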